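/- arXiv:2303.07903 — 7 statements merged into one kernel-verified Lean document; each statement's English description precedes it below -/
import Mathlib

section
/- Let X₁, …, X_{n_s} : Ω → {1,…,n_c} be independent random variables on a probability space (Ω, ℙ) with ℙ[X_j = i] = p_i for every j and i, where p ∈ Δ^{n_c}. For i ∈ {1,…,n_c}, let I_i := #{ j ∈ {1,…,n_s} : X_j = i } and fix k ∈ ℕ^{n_c}. Define α := 1 − ( n_c − Σ_{i=1}^{n_c} Σ_{l=0}^{k_i} C(n_s, l)·p_i^l·(1−p_i)^{n_s−l} ), where C(n, l) is the binomial coefficient. Then α ≤ 1 and ℙ[ ∀ i ∈ {1,…,n_c}, I_i ≤ k_i ] ≥ Φ(α). -/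
open MeasureTheory ProbabilityTheory

lemma binom_event_aux {Ω : Type*} [MeasurableSpace Ω] (μ : Measure Ω) [IsProbabilityMeasure μ]
    (ns nc : ℕ) (X : Fin ns → Ω → Fin nc) (hmeas : ∀ j, Measurable (X j))
    (hindep : iIndepFun X μ) (i : Fin nc) (pi : ℝ)
    (h0 : 0 ≤ pi) (h1 : pi ≤ 1) (hdist : ∀ j, μ {ω | X j ω = i} = ENNReal.ofReal pi) (k : ℕ) :
    μ {ω | (Finset.univ.filter fun j => X j ω = i).card ≤ k}
      = ENNReal.ofReal (∑ l ∈ Finset.range (k+1),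
          (ns.choose l : ℝ) * pi ^ l * (1 - pi) ^ (ns - l)) := by
  classical
  set s : Finset (Fin ns) → Fin ns → Set Ω :=
    fun A j => if j ∈ A then {ω | X j ω = i} else {ω | X j ω = i}ᶜ with hs
  set C : Finset (Fin ns) → Set Ω := fun A => ⋂ j, s A j with hC
  have hsing : ∀ j, {ω | X j ω = i} = X j ⁻¹' {i} := fun j => rfl
  have hms : ∀ A j, MeasurableSet[(inferInstance : MeasurableSpace (Fin nc)).comap (X j)] (s A j) := by
    intro A j
    by_cases hj : j ∈ A <;> simp only [hs, hj, if_true, if_false]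
    · exact ⟨{i}, measurableSet_singleton i, rfl⟩
    · exact MeasurableSet.compl ⟨{i}, measurableSet_singleton i, rfl⟩
  have hmsC : ∀ A, MeasurableSet (C A) := by
    intro A
    refine MeasurableSet.iInter fun j => ?_
    by_cases hj : j ∈ A <;> simp only [hs, hj, if_true, if_false]
    · exact (hmeas j) (measurableSet_singleton i)
    · exact ((hmeas j) (measurableSet_singleton i)).compl
  have hcompl : ∀ j, μ {ω | X j ω = i}ᶜ = ENNReal.ofReal (1 - pi) := by
    intro j
    have hm : MeasurableSet {ω | X j ω = i} := (hmeas j) (measurableSet_singleton i)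
    rw [measure_compl hm (measure_ne_top _ _),
      hdist j, measure_univ, ENNReal.ofReal_sub _ h0, ENNReal.ofReal_one]
  have hmuC : ∀ A : Finset (Fin ns),
      μ (C A) = ENNReal.ofReal (pi ^ A.card * (1 - pi) ^ (ns - A.card)) := by
    intro A
    rw [hC, hindep.meas_iInter (hms A)]
    have : ∀ j, μ (s A j) = if j ∈ A then ENNReal.ofReal pi else ENNReal.ofReal (1 - pi) := by
      intro j; by_cases hj : j ∈ A <;> simp only [hs, hj, if_true, if_false]
      · exact hdist j
      · exact hcompl j
    simp_rw [this]
    rw [Finset.prod_ite, Finset.prod_const, Finset.prod_const]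
    have hca : (Finset.univ.filter (· ∈ A)).card = A.card := by
      congr 1; ext j; simp
    have hcb : (Finset.univ.filter (· ∉ A)).card = ns - A.card := by
      have : (Finset.univ.filter (· ∉ A)) = Aᶜ := by ext j; simp
      rw [this, Finset.card_compl, Fintype.card_fin]
    rw [hca, hcb, ENNReal.ofReal_mul (pow_nonneg h0 _), ENNReal.ofReal_pow h0,
      ENNReal.ofReal_pow (by linarith)]
  have hCmem : ∀ (ω : Ω) (A : Finset (Fin ns)),
      ω ∈ C A ↔ (Finset.univ.filter fun j => X j ω = i) = A := by
    intro ω A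
    simp only [hC, Set.mem_iInter]
    constructor
    · intro h; ext j
      have := h j
      by_cases hj : j ∈ A <;> simp only [hs, hj, if_true, if_false, Set.mem_setOf_eq,
        Set.mem_compl_iff] at this <;>
        simp [hj, Finset.mem_filter, this]
    · intro h j
      have hj : X j ω = i ↔ j ∈ A := by
        rw [← h]; simp
      by_cases hjA : j ∈ A <;> simp only [hs, hjA, if_true, if_false, Set.mem_setOf_eq,
        Set.mem_compl_iff] <;> tauto
  set T : Finset (Finset (Fin ns)) := Finset.univ.filter (fun A => A.card ≤ k) with hT
  have hE : {ω | (Finset.univ.filter fun j => X j ω = i).card ≤ k} = ⋃ A ∈ T, C A := by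
    ext ω
    simp only [Set.mem_setOf_eq, Set.mem_iUnion, hT, Finset.mem_filter, Finset.mem_univ, true_and]
    constructor
    · intro h
      exact ⟨_, h, (hCmem ω _).mpr rfl⟩
    · rintro ⟨A, hA, hω⟩
      rw [(hCmem ω A).mp hω]; exact hA
  have hdisj : (T : Set (Finset (Fin ns))).PairwiseDisjoint C := by
    intro A _ B _ hAB
    rw [Function.onFun, Set.disjoint_left]
    intro ω hA hB
    exact hAB (((hCmem ω A).mp hA).symm.trans ((hCmem ω B).mp hB))
  rw [hE, measure_biUnion_finset hdisj (fun A _ => hmsC A)]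
  simp_rw [hmuC]
  have hTbU : T = (Finset.range (k+1)).biUnion (fun l => Finset.powersetCard l Finset.univ) := by
    ext A
    simp [hT, Finset.mem_powersetCard, Nat.lt_succ_iff]
  rw [hTbU, Finset.sum_biUnion]
  · rw [ENNReal.ofReal_sum_of_nonneg]
    · refine Finset.sum_congr rfl fun l hl => ?_
      have hcard : ∀ A ∈ Finset.powersetCard l (Finset.univ : Finset (Fin ns)), A.card = l := by
        intro A hA; exact (Finset.mem_powersetCard.mp hA).2
      rw [Finset.sum_congr rfl (fun A hA => by rw [hcard A hA]), Finset.sum_const,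
        Finset.card_powersetCard, Finset.card_univ, Fintype.card_fin, nsmul_eq_mul,
        ENNReal.ofReal_mul (mul_nonneg (Nat.cast_nonneg _) (pow_nonneg h0 _)),
        ENNReal.ofReal_mul (Nat.cast_nonneg _),
        ENNReal.ofReal_pow h0, ENNReal.ofReal_pow (by linarith), ENNReal.ofReal_natCast,
        ENNReal.ofReal_mul (pow_nonneg h0 _), ENNReal.ofReal_pow h0,
        ENNReal.ofReal_pow (by linarith : (0:ℝ) ≤ 1 - pi), mul_assoc]
    · intro l _
      exact mul_nonneg (mul_nonneg (Nat.cast_nonneg _) (pow_nonneg h0 _))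
        (pow_nonneg (by linarith) _)
  · intro a _ b _ hab
    rw [Function.onFun, Finset.disjoint_left]
    intro A hA hB
    exact hab ((Finset.mem_powersetCard.mp hA).2.symm.trans (Finset.mem_powersetCard.mp hB).2)

lemma meas_event_aux {Ω : Type*} [MeasurableSpace Ω] (ns nc : ℕ)
    (X : Fin ns → Ω → Fin nc) (hmeas : ∀ j, Measurable (X j)) (i : Fin nc) (k : ℕ) :
    MeasurableSet {ω | (Finset.univ.filter fun j => X j ω = i).card ≤ k} := by
  have hf : Measurable fun ω => (Finset.univ.filter fun j => X j ω = i).card := by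
    simp_rw [Finset.card_filter]
    exact Finset.measurable_sum _ (fun j _ =>
      Measurable.ite ((hmeas j) (measurableSet_singleton i)) measurable_const measurable_const)
  exact hf measurableSet_Iic

/-- Lemma 2: lower bound on the probability that all sampling constraints hold. -/
theorem constraint_event_probability_bound
    {Ω : Type*} [MeasurableSpace Ω] (μ : Measure Ω) [IsProbabilityMeasure μ]
    (ns nc : ℕ) (hns : 0 < ns) (hnc : 0 < nc)
    (X : Fin ns → Ω → Fin nc)
    (hmeas : ∀ j, Measurable (X j))
    (hindep : iIndepFun X μ)
    (p : Fin nc → ℝ)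
    (hp_nonneg : ∀ i, 0 ≤ p i) (hp_sum : ∑ i, p i = 1)
    (hdist : ∀ j i, μ {ω | X j ω = i} = ENNReal.ofReal (p i))
    (k : Fin nc → ℕ)
    (α : ℝ)
    (hα : α = 1 - ((nc : ℝ) - ∑ i, ∑ l ∈ Finset.range (k i + 1),
      (ns.choose l : ℝ) * p i ^ l * (1 - p i) ^ (ns - l))) :
    α ≤ 1 ∧
    ENNReal.ofReal (max α 0) ≤
      μ {ω | ∀ i, (Finset.univ.filter fun j => X j ω = i).card ≤ k i} := by
  classical
  set S : Fin nc → ℝ := fun i => ∑ l ∈ Finset.range (k i + 1),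
    (ns.choose l : ℝ) * p i ^ l * (1 - p i) ^ (ns - l) with hSdef
  have hp1 : ∀ i, p i ≤ 1 := by
    intro i
    calc p i ≤ ∑ j, p j := Finset.single_le_sum (fun j _ => hp_nonneg j) (Finset.mem_univ i)
    _ = 1 := hp_sum
  set E : Fin nc → Set Ω := fun i =>
    {ω | (Finset.univ.filter fun j => X j ω = i).card ≤ k i} with hEdef
  have hE : ∀ i, μ (E i) = ENNReal.ofReal (S i) := fun i =>
    binom_event_aux μ ns nc X hmeas hindep i (p i) (hp_nonneg i) (hp1 i)
      (fun j => hdist j i) (k i)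
  have hmsE : ∀ i, MeasurableSet (E i) := fun i => meas_event_aux ns nc X hmeas i (k i)
  have hS0 : ∀ i, 0 ≤ S i := by
    intro i
    refine Finset.sum_nonneg fun l _ => ?_
    have := hp_nonneg i; have := hp1 i
    exact mul_nonneg (mul_nonneg (Nat.cast_nonneg _) (pow_nonneg (by linarith) _))
      (pow_nonneg (by linarith) _)
  have hS1 : ∀ i, S i ≤ 1 := by
    intro i
    have h := hE i
    have : ENNReal.ofReal (S i) ≤ 1 := h ▸ prob_le_one
    exact ENNReal.ofReal_le_one.mp this
  have hsum_le : ∑ i, S i ≤ (nc : ℝ) := by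
    calc ∑ i, S i ≤ ∑ _i : Fin nc, (1:ℝ) := Finset.sum_le_sum fun i _ => hS1 i
    _ = (nc : ℝ) := by simp
  have hα1 : α ≤ 1 := by rw [hα]; linarith
  refine ⟨hα1, ?_⟩
  have hGset : {ω | ∀ i, (Finset.univ.filter fun j => X j ω = i).card ≤ k i} = ⋂ i, E i := by
    ext ω; simp [hEdef, Set.mem_iInter]
  rw [hGset]
  have hmsG : MeasurableSet (⋂ i, E i) := MeasurableSet.iInter hmsE
  have hGc : μ (⋂ i, E i)ᶜ ≤ ENNReal.ofReal ((nc : ℝ) - ∑ i, S i) := by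
    calc μ (⋂ i, E i)ᶜ = μ (⋃ i, (E i)ᶜ) := by rw [Set.compl_iInter]
    _ ≤ ∑ i, μ (E i)ᶜ := measure_iUnion_fintype_le _ _
    _ = ∑ i, ENNReal.ofReal (1 - S i) := by
        refine Finset.sum_congr rfl fun i _ => ?_
        rw [prob_compl_eq_one_sub (hmsE i), hE i,
          ENNReal.ofReal_sub _ (hS0 i), ENNReal.ofReal_one]
    _ = ENNReal.ofReal (∑ i, (1 - S i)) :=
        (ENNReal.ofReal_sum_of_nonneg (fun i _ => by linarith [hS1 i])).symm
    _ = ENNReal.ofReal ((nc : ℝ) - ∑ i, S i) := by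
        rw [Finset.sum_sub_distrib]; simp
  by_cases hα0 : α ≤ 0
  · rw [max_eq_right hα0]; simp
  · push_neg at hα0
    rw [max_eq_left hα0.le]
    have hnn : (0:ℝ) ≤ (nc : ℝ) - ∑ i, S i := by linarith
    have h1 : ENNReal.ofReal α = 1 - ENNReal.ofReal ((nc : ℝ) - ∑ i, S i) := by
      rw [hα, ENNReal.ofReal_sub _ hnn, ENNReal.ofReal_one]
    rw [h1]
    calc 1 - ENNReal.ofReal ((nc : ℝ) - ∑ i, S i) ≤ 1 - μ (⋂ i, E i)ᶜ :=
        tsub_le_tsub_left hGc 1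
    _ = μ (⋂ i, E i) := by
        rw [prob_compl_eq_one_sub hmsG, ENNReal.sub_sub_cancel ENNReal.one_ne_top prob_le_one]
end

section
/- Let X₁, …, X_{n_s} : Ω → {1,…,n_c} be independent random variables on a probability space (Ω, ℙ) with ℙ[X_j = i] = p_i for every j and i, where p ∈ Δ^{n_c}. For i ∈ {1,…,n_c}, let I_i := #{ j ∈ {1,…,n_s} : X_j = i }, fix k ∈ ℕ^{n_c}, let 𝒦 denote the event {∀ i ∈ {1,…,n_c}, I_i ≤ k_i}, and define α := 1 − ( n_c − Σ_{i=1}^{n_c} Σ_{l=0}^{k_i} C(n_s, l)·p_i^l·(1−p_i)^{n_s−l} ). Let 𝒜 ⊆ Ω be any measurable event with ℙ[𝒜] ≥ 1 − δ for some δ ∈ (0,1). Then α ≤ 1 and ℙ[ 𝒜 ∩ 𝒦 ] ≥ Φ(α − δ). -/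
open MeasureTheory ProbabilityTheory

/-- Theorem 4: concentration bound jointly with the sampling-constraint event. -/
theorem intersection_with_constraint_bound
    {Ω : Type*} [MeasurableSpace Ω] (μ : Measure Ω) [IsProbabilityMeasure μ]
    (ns nc : ℕ) (hns : 0 < ns) (hnc : 0 < nc)
    (X : Fin ns → Ω → Fin nc)
    (hmeas : ∀ j, Measurable (X j))
    (hindep : iIndepFun X μ)
    (p : Fin nc → ℝ)
    (hp_nonneg : ∀ i, 0 ≤ p i) (hp_sum : ∑ i, p i = 1)
    (hdist : ∀ j i, μ {ω | X j ω = i} = ENNReal.ofReal (p i))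
    (k : Fin nc → ℕ)
    (α : ℝ)
    (hα : α = 1 - ((nc : ℝ) - ∑ i, ∑ l ∈ Finset.range (k i + 1),
      (ns.choose l : ℝ) * p i ^ l * (1 - p i) ^ (ns - l)))
    (A : Set Ω) (hA : MeasurableSet A)
    (δ : ℝ) (hδ : δ ∈ Set.Ioo (0 : ℝ) 1)
    (hPA : ENNReal.ofReal (1 - δ) ≤ μ A) :
    α ≤ 1 ∧
    ENNReal.ofReal (max (α - δ) 0) ≤
      μ (A ∩ {ω | ∀ i, (Finset.univ.filter fun j => X j ω = i).card ≤ k i}) := by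
  obtain ⟨hδ0, hδ1⟩ := hδ
  have hp_le : ∀ i, p i ≤ 1 := by
    intro i
    rw [← hp_sum]
    exact Finset.single_le_sum (fun j _ => hp_nonneg j) (Finset.mem_univ i)
  set c : Fin nc → ℝ := fun i => ∑ l ∈ Finset.range (k i + 1),
      (ns.choose l : ℝ) * p i ^ l * (1 - p i) ^ (ns - l) with hc
  have hterm_nonneg : ∀ i l, 0 ≤ (ns.choose l : ℝ) * p i ^ l * (1 - p i) ^ (ns - l) := by
    intro i l
    have h1 : (0:ℝ) ≤ 1 - p i := by linarith [hp_le i]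
    exact mul_nonneg (mul_nonneg (Nat.cast_nonneg _) (pow_nonneg (hp_nonneg i) _))
      (pow_nonneg h1 _)
  have hc_nonneg : ∀ i, 0 ≤ c i := fun i =>
    Finset.sum_nonneg fun l _ => hterm_nonneg i l
  have hc_le_one : ∀ i, c i ≤ 1 := by
    intro i
    have hsub1 : Finset.range (k i + 1) ⊆ Finset.range (k i + 1 + (ns + 1)) :=
      Finset.range_subset_range.2 (by omega)
    have hsub2 : Finset.range (ns + 1) ⊆ Finset.range (k i + 1 + (ns + 1)) :=
      Finset.range_subset_range.2 (by omega)
    have hbig : ∑ l ∈ Finset.range (k i + 1 + (ns + 1)),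
        (ns.choose l : ℝ) * p i ^ l * (1 - p i) ^ (ns - l) = 1 := by
      rw [← Finset.sum_subset hsub2 (by
        intro l _ hl
        have : ns < l := by simpa [Nat.lt_succ_iff] using hl
        simp [Nat.choose_eq_zero_of_lt this])]
      have h := add_pow (p i) (1 - p i) ns
      have h1 : p i + (1 - p i) = 1 := by ring
      rw [h1, one_pow] at h
      rw [show ∑ l ∈ Finset.range (ns + 1), (ns.choose l : ℝ) * p i ^ l * (1 - p i) ^ (ns - l)
          = ∑ l ∈ Finset.range (ns + 1), p i ^ l * (1 - p i) ^ (ns - l) * (ns.choose l : ℝ)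
        from Finset.sum_congr rfl fun l _ => by ring]
      exact h.symm
    calc c i ≤ ∑ l ∈ Finset.range (k i + 1 + (ns + 1)),
          (ns.choose l : ℝ) * p i ^ l * (1 - p i) ^ (ns - l) :=
        Finset.sum_le_sum_of_subset_of_nonneg hsub1 fun l _ _ => hterm_nonneg i l
      _ = 1 := hbig
  have hαle : α ≤ 1 := by
    rw [hα]
    have : ∑ i, c i ≤ (nc : ℝ) := by
      calc ∑ i, c i ≤ ∑ _i : Fin nc, (1:ℝ) := Finset.sum_le_sum fun i _ => hc_le_one i
        _ = nc := by simp
    linarith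
  refine ⟨hαle, ?_⟩
  -- events indexed by subsets
  set B : Fin nc → Finset (Fin ns) → Fin ns → Set (Fin nc) :=
    fun i S j => if j ∈ S then {i} else ({i}ᶜ) with hB
  set E : Fin nc → Finset (Fin ns) → Set Ω :=
    fun i S => ⋂ j, X j ⁻¹' (B i S j) with hE
  have hB_meas : ∀ i S j, MeasurableSet (B i S j) := by
    intro i S j
    by_cases hj : j ∈ S <;>
      simp [hB, hj, measurableSet_singleton, (measurableSet_singleton i).compl]
  have hE_meas : ∀ i S, MeasurableSet (E i S) := fun i S =>
    MeasurableSet.iInter fun j => (hmeas j) (hB_meas i S j)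
  have hE_mem : ∀ i S ω, ω ∈ E i S ↔ ∀ j, (X j ω = i ↔ j ∈ S) := by
    intro i S ω
    simp only [hE, Set.mem_iInter, Set.mem_preimage, hB]
    refine forall_congr' fun j => ?_
    by_cases hjS : j ∈ S <;> simp [hjS]
  have hX_singleton : ∀ j i, μ (X j ⁻¹' {i}) = ENNReal.ofReal (p i) := by
    intro j i
    rw [← hdist j i]
    rfl
  have hX_compl : ∀ j i, μ (X j ⁻¹' ({i}ᶜ)) = ENNReal.ofReal (1 - p i) := by
    intro j i
    rw [Set.preimage_compl, prob_compl_eq_one_sub ((hmeas j) (measurableSet_singleton i)),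
      hX_singleton j i, ENNReal.ofReal_sub 1 (hp_nonneg i), ENNReal.ofReal_one]
  have hE_val : ∀ i S, μ (E i S) =
      ENNReal.ofReal (p i ^ S.card * (1 - p i) ^ (ns - S.card)) := by
    intro i S
    have hprod := hindep.meas_iInter (s := fun j => X j ⁻¹' (B i S j))
      (fun j => ⟨B i S j, hB_meas i S j, rfl⟩)
    have h1 : (0:ℝ) ≤ 1 - p i := by linarith [hp_le i]
    rw [hE]
    rw [hprod]
    have hval : ∀ j, μ (X j ⁻¹' (B i S j)) =
        if j ∈ S then ENNReal.ofReal (p i) else ENNReal.ofReal (1 - p i) := by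
      intro j
      by_cases hj : j ∈ S
      · simp only [hB, if_pos hj]
        exact hX_singleton j i
      · simp only [hB, if_neg hj]
        exact hX_compl j i
    rw [Finset.prod_congr rfl fun j _ => hval j, Finset.prod_ite, Finset.prod_const,
      Finset.prod_const]
    have hc1 : (Finset.univ.filter (· ∈ S)).card = S.card := by
      congr 1
      ext j
      simp
    have hc2 : (Finset.univ.filter (fun j => j ∉ S)).card = ns - S.card := by
      have : Finset.univ.filter (fun j => j ∉ S) = Sᶜ := by
        ext j; simp
      rw [this, Finset.card_compl, Fintype.card_fin]
    rw [hc1, hc2, ENNReal.ofReal_mul (pow_nonneg (hp_nonneg i) _), ENNReal.ofReal_pow (hp_nonneg i),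
      ENNReal.ofReal_pow h1]
  -- the family of admissible subsets
  set 𝒮 : Fin nc → Finset (Finset (Fin ns)) :=
    fun i => (Finset.range (k i + 1)).biUnion
      (fun m => Finset.powersetCard m Finset.univ) with h𝒮
  have hset : ∀ i, {ω | (Finset.univ.filter fun j => X j ω = i).card ≤ k i}
      = ⋃ S ∈ 𝒮 i, E i S := by
    intro i
    ext ω
    simp only [Set.mem_setOf_eq, Set.mem_iUnion, exists_prop]
    constructor
    · intro h
      refine ⟨Finset.univ.filter (fun j => X j ω = i), ?_, ?_⟩
      · rw [h𝒮]
        refine Finset.mem_biUnion.2 ⟨(Finset.univ.filter fun j => X j ω = i).card,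
          Finset.mem_range.2 (Nat.lt_succ_of_le h), ?_⟩
        exact Finset.mem_powersetCard_univ.2 rfl
      · exact (hE_mem i _ ω).2 fun j => by simp
    · rintro ⟨S, hS, hω⟩
      have hcard : S.card ≤ k i := by
        rw [h𝒮] at hS
        obtain ⟨m, hm, hSm⟩ := Finset.mem_biUnion.1 hS
        have h1 := Finset.mem_powersetCard_univ.1 hSm
        have h2 := Finset.mem_range.1 hm
        omega
      have hfil : Finset.univ.filter (fun j => X j ω = i) = S := by
        ext j
        simp [(hE_mem i S ω).1 hω j]
      rw [hfil]
      exact hcard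
  have hdisj : ∀ i, (↑(𝒮 i) : Set (Finset (Fin ns))).PairwiseDisjoint (E i) := by
    intro i S hS T hT hST
    refine Set.disjoint_left.2 fun ω hωS hωT => hST ?_
    ext j
    rw [← (hE_mem i S ω).1 hωS j, (hE_mem i T ω).1 hωT j]
  have hμKi : ∀ i, μ {ω | (Finset.univ.filter fun j => X j ω = i).card ≤ k i}
      = ENNReal.ofReal (c i) := by
    intro i
    rw [hset i, measure_biUnion_finset (hdisj i) (fun S _ => hE_meas i S), h𝒮,
      Finset.sum_biUnion (by
        intro a ha b hb hab
        refine Finset.disjoint_left.2 fun S hSa hSb => hab ?_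
        rw [← Finset.mem_powersetCard_univ.1 hSa, ← Finset.mem_powersetCard_univ.1 hSb]),
      hc, ENNReal.ofReal_sum_of_nonneg fun l _ => hterm_nonneg i l]
    refine Finset.sum_congr rfl fun m _ => ?_
    have h1 : (0:ℝ) ≤ 1 - p i := by linarith [hp_le i]
    calc ∑ S ∈ Finset.powersetCard m Finset.univ, μ (E i S)
        = ∑ S ∈ Finset.powersetCard m Finset.univ,
          ENNReal.ofReal (p i ^ m * (1 - p i) ^ (ns - m)) := by
          refine Finset.sum_congr rfl fun S hS => ?_
          rw [hE_val i S, Finset.mem_powersetCard_univ.1 hS]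
      _ = (Finset.powersetCard m (Finset.univ : Finset (Fin ns))).card •
          ENNReal.ofReal (p i ^ m * (1 - p i) ^ (ns - m)) := Finset.sum_const _
      _ = ENNReal.ofReal ((ns.choose m : ℝ) * p i ^ m * (1 - p i) ^ (ns - m)) := by
          rw [Finset.card_powersetCard, Finset.card_univ, Fintype.card_fin, nsmul_eq_mul,
            mul_assoc, ← ENNReal.ofReal_natCast (ns.choose m),
            ← ENNReal.ofReal_mul (by positivity)]
  -- the constraint event
  set K : Set Ω := {ω | ∀ i, (Finset.univ.filter fun j => X j ω = i).card ≤ k i} with hK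
  have hKinter : K = ⋂ i, {ω | (Finset.univ.filter fun j => X j ω = i).card ≤ k i} := by
    ext ω; simp [hK]
  have hKi_meas : ∀ i, MeasurableSet {ω | (Finset.univ.filter fun j => X j ω = i).card ≤ k i} := by
    intro i
    rw [hset i]
    exact (𝒮 i).measurableSet_biUnion fun S _ => hE_meas i S
  have hK_meas : MeasurableSet K := by
    rw [hKinter]
    exact MeasurableSet.iInter fun i => hKi_meas i
  -- union bound
  have hKc : μ Kᶜ ≤ ENNReal.ofReal ((nc : ℝ) - ∑ i, c i) := by
    have hsub : Kᶜ ⊆ ⋃ i, ({ω | (Finset.univ.filter fun j => X j ω = i).card ≤ k i}ᶜ) := by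
      intro ω hω
      simp only [hK, Set.mem_compl_iff, Set.mem_setOf_eq, not_forall] at hω
      obtain ⟨i, hi⟩ := hω
      exact Set.mem_iUnion.2 ⟨i, hi⟩
    calc μ Kᶜ ≤ ∑' i, μ ({ω | (Finset.univ.filter fun j => X j ω = i).card ≤ k i}ᶜ) :=
        le_trans (measure_mono hsub) (measure_iUnion_le _)
      _ = ∑ i, μ ({ω | (Finset.univ.filter fun j => X j ω = i).card ≤ k i}ᶜ) :=
        tsum_fintype _
      _ = ∑ i, ENNReal.ofReal (1 - c i) := by
        refine Finset.sum_congr rfl fun i _ => ?_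
        rw [prob_compl_eq_one_sub (hKi_meas i), hμKi i, ENNReal.ofReal_sub 1 (hc_nonneg i),
          ENNReal.ofReal_one]
      _ = ENNReal.ofReal (∑ i, (1 - c i)) :=
        (ENNReal.ofReal_sum_of_nonneg fun i _ => by linarith [hc_le_one i]).symm
      _ = ENNReal.ofReal ((nc : ℝ) - ∑ i, c i) := by
        rw [Finset.sum_sub_distrib]
        simp
  -- pass to real arithmetic
  have hPAr : 1 - δ ≤ (μ A).toReal :=
    (ENNReal.ofReal_le_iff_le_toReal (measure_ne_top μ A)).1 hPA
  have hKcr : (μ Kᶜ).toReal ≤ (nc : ℝ) - ∑ i, c i := by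
    have hnn : (0:ℝ) ≤ (nc : ℝ) - ∑ i, c i := by
      have : ∑ i, c i ≤ (nc : ℝ) := by
        calc ∑ i, c i ≤ ∑ _i : Fin nc, (1:ℝ) := Finset.sum_le_sum fun i _ => hc_le_one i
          _ = nc := by simp
      linarith
    have := ENNReal.toReal_mono ENNReal.ofReal_ne_top hKc
    rwa [ENNReal.toReal_ofReal hnn] at this
  have hKr : α ≤ (μ K).toReal := by
    have h1 : μ Kᶜ = 1 - μ K := prob_compl_eq_one_sub hK_meas
    have h2 : (μ Kᶜ).toReal = 1 - (μ K).toReal := by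
      rw [h1, ENNReal.toReal_sub_of_le prob_le_one ENNReal.one_ne_top, ENNReal.toReal_one]
    rw [hα]
    linarith
  have hinter : (μ A).toReal + (μ K).toReal ≤ 1 + (μ (A ∩ K)).toReal := by
    have h1 : μ A + μ K ≤ 1 + μ (A ∩ K) := by
      rw [← measure_union_add_inter A hK_meas]
      exact add_le_add_left prob_le_one _
    have h2 := ENNReal.toReal_mono (by finiteness) h1
    rwa [ENNReal.toReal_add (measure_ne_top μ A) (measure_ne_top μ K),
      ENNReal.toReal_add ENNReal.one_ne_top (measure_ne_top μ _), ENNReal.toReal_one] at h2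
  have hfinal : α - δ ≤ (μ (A ∩ K)).toReal := by linarith
  rcases le_or_gt (α - δ) 0 with h | h
  · rw [max_eq_right h]
    simp only [ENNReal.ofReal_zero]
    exact zero_le
  · rw [max_eq_left h.le]
    exact (ENNReal.ofReal_le_iff_le_toReal (measure_ne_top μ _)).2 hfinal
end

section
/- Let X₁, …, X_{n_s} : Ω → {1,…,n_c} be independent random variables on a probability space (Ω, ℙ) with ℙ[X_j = i] = p_i for every j and i, where p ∈ Δ^{n_c}. For i ∈ {1,…,n_c}, let I_i := #{ j ∈ {1,…,n_s} : X_j = i }, fix k ∈ ℕ^{n_c}, let 𝒦 denote the event {∀ i ∈ {1,…,n_c}, I_i ≤ k_i}, and define α := 1 − ( n_c − Σ_{i=1}^{n_c} Σ_{l=0}^{k_i} C(n_s, l)·p_i^l·(1−p_i)^{n_s−l} ). Assume α > 0. Let 𝒜 ⊆ Ω be any measurable event with ℙ[𝒜] ≥ 1 − δ for some δ ∈ (0,1). Then ℙ[𝒦] > 0 and the conditional probability satisfies ℙ[ 𝒜 ∣ 𝒦 ] ≥ Φ(1 − δ/α). -/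
open MeasureTheory ProbabilityTheory
open scoped ENNReal

lemma meas_count_le {Ω : Type*} [MeasurableSpace Ω] (μ : Measure Ω) [IsProbabilityMeasure μ]
    {ns nc : ℕ} (X : Fin ns → Ω → Fin nc)
    (hmeas : ∀ j, Measurable (X j))
    (hindep : iIndepFun X μ)
    (p : Fin nc → ℝ) (hp0 : ∀ i, 0 ≤ p i) (hp1 : ∀ i, p i ≤ 1)
    (hdist : ∀ j i, μ {ω | X j ω = i} = ENNReal.ofReal (p i))
    (i : Fin nc) (k : ℕ) :
    μ {ω | (Finset.univ.filter fun j => X j ω = i).card ≤ k} =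
      ENNReal.ofReal (∑ l ∈ Finset.range (k + 1),
        (ns.choose l : ℝ) * p i ^ l * (1 - p i) ^ (ns - l)) := by
  classical
  set q : ℝ≥0∞ := ENNReal.ofReal (p i) with hq
  -- the elementary event "X j = i exactly for j ∈ s"
  have hsetEq : ∀ s : Finset (Fin ns), {ω | (Finset.univ.filter fun j => X j ω = i) = s}
        = ⋂ j ∈ Finset.univ, X j ⁻¹' (if j ∈ s then {i} else {i}ᶜ) := by
    intro s
    have hset : {ω | (Finset.univ.filter fun j => X j ω = i) = s}
        = ⋂ j ∈ Finset.univ, X j ⁻¹' (if j ∈ s then {i} else {i}ᶜ) := by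
      ext ω
      simp only [Set.mem_setOf_eq, Finset.ext_iff, Finset.mem_filter, Finset.mem_univ,
        true_and, Set.mem_iInter, Set.mem_preimage]
      constructor
      · intro h j _
        by_cases hj : j ∈ s
        · simp [hj, (h j).mpr hj]
        · simp only [hj, if_false, Set.mem_compl_iff, Set.mem_singleton_iff]
          exact fun hx => hj ((h j).mp hx)
      · intro h j
        have hjj := h j trivial
        constructor
        · intro hx
          by_contra hj
          simp [hj] at hjj
          exact hjj hx
        · intro hj
          simpa [hj] using hjj
    exact hset
  have hFmeas : ∀ s : Finset (Fin ns),
      MeasurableSet {ω | (Finset.univ.filter fun j => X j ω = i) = s} := by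
    intro s
    rw [hsetEq s]
    exact MeasurableSet.biInter (Set.to_countable _) fun j _ => (hmeas j)
      (by by_cases hj : j ∈ s <;> simp [hj, MeasurableSet.singleton])
  have hE : ∀ s : Finset (Fin ns),
      μ {ω | (Finset.univ.filter fun j => X j ω = i) = s}
        = q ^ s.card * (1 - q) ^ (ns - s.card) := by
    intro s
    rw [hsetEq s, hindep.measure_inter_preimage_eq_mul Finset.univ
      (fun j _ => by by_cases hj : j ∈ s <;> simp [hj, MeasurableSet.singleton])]
    have hterm : ∀ j : Fin ns, μ (X j ⁻¹' (if j ∈ s then {i} else ({i}ᶜ : Set (Fin nc))))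
        = if j ∈ s then q else 1 - q := by
      intro j
      by_cases hj : j ∈ s
      · simp only [hj, if_true]
        rw [show X j ⁻¹' {i} = {ω | X j ω = i} from rfl, hdist]
      · simp only [hj, if_false]
        have : X j ⁻¹' ({i}ᶜ : Set (Fin nc)) = {ω | X j ω = i}ᶜ := rfl
        rw [this, prob_compl_eq_one_sub (by
          have : ({ω | X j ω = i} : Set Ω) = X j ⁻¹' {i} := rfl
          rw [this]; exact (hmeas j) (MeasurableSet.singleton i)), hdist]
    simp only [hterm]
    rw [← Finset.prod_mul_prod_compl s]
    rw [Finset.prod_ite_of_true (fun j hj => hj) _ _,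
      Finset.prod_ite_of_false (fun j hj => by simpa using hj) _ _]
    simp [Finset.card_compl, Fintype.card_fin]
  -- measure of the event "exactly l of the X j equal i"
  have hcount : ∀ l : ℕ, μ {ω | (Finset.univ.filter fun j => X j ω = i).card = l}
      = (ns.choose l : ℝ≥0∞) * q ^ l * (1 - q) ^ (ns - l) := by
    intro l
    have hunion : {ω | (Finset.univ.filter fun j => X j ω = i).card = l}
        = ⋃ s ∈ Finset.powersetCard l (Finset.univ : Finset (Fin ns)),
            {ω | (Finset.univ.filter fun j => X j ω = i) = s} := by
      ext ω
      simp only [Set.mem_setOf_eq, Set.mem_iUnion, Finset.mem_powersetCard_univ]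
      exact ⟨fun h => ⟨_, h, rfl⟩, fun ⟨s, hs, he⟩ => he ▸ hs⟩
    have hdisj : (Finset.powersetCard l (Finset.univ : Finset (Fin ns)) : Set (Finset (Fin ns))).PairwiseDisjoint
        (fun s => {ω | (Finset.univ.filter fun j => X j ω = i) = s}) := by
      intro s _ t _ hst
      refine Set.disjoint_left.mpr fun ω hs ht => hst ?_
      exact hs.symm.trans ht
    rw [hunion, measure_biUnion_finset hdisj fun s _ => hFmeas s]
    have : ∀ s ∈ Finset.powersetCard l (Finset.univ : Finset (Fin ns)),
        μ {ω | (Finset.univ.filter fun j => X j ω = i) = s}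
          = q ^ l * (1 - q) ^ (ns - l) := by
      intro s hs
      rw [hE s, (Finset.mem_powersetCard_univ.mp hs : s.card = l)]
    rw [Finset.sum_congr rfl this, Finset.sum_const, Finset.card_powersetCard,
      Finset.card_univ, Fintype.card_fin, nsmul_eq_mul, mul_assoc]
  -- the event "at most k of the X j equal i"
  have hle : {ω | (Finset.univ.filter fun j => X j ω = i).card ≤ k}
      = ⋃ l ∈ Finset.range (k + 1), {ω | (Finset.univ.filter fun j => X j ω = i).card = l} := by
    ext ω
    simp only [Set.mem_setOf_eq, Set.mem_iUnion, Finset.mem_range, Nat.lt_succ_iff]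
    exact ⟨fun h => ⟨_, h, rfl⟩, fun ⟨l, hl, he⟩ => he ▸ hl⟩
  have hlmeas : ∀ l : ℕ, MeasurableSet {ω | (Finset.univ.filter fun j => X j ω = i).card = l} := by
    intro l
    have : {ω | (Finset.univ.filter fun j => X j ω = i).card = l}
        = ⋃ s ∈ Finset.powersetCard l (Finset.univ : Finset (Fin ns)),
            {ω | (Finset.univ.filter fun j => X j ω = i) = s} := by
      ext ω
      simp only [Set.mem_setOf_eq, Set.mem_iUnion, Finset.mem_powersetCard_univ]
      exact ⟨fun h => ⟨_, h, rfl⟩, fun ⟨s, hs, he⟩ => he ▸ hs⟩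
    rw [this]
    exact MeasurableSet.biUnion (Set.to_countable _) fun s _ => hFmeas s
  have hldisj : (↑(Finset.range (k + 1)) : Set ℕ).PairwiseDisjoint
      (fun l => {ω | (Finset.univ.filter fun j => X j ω = i).card = l}) := by
    intro l _ m _ hlm
    refine Set.disjoint_left.mpr fun ω hl hm => hlm ?_
    exact hl.symm.trans hm
  have h1q : (1 : ℝ≥0∞) - q = ENNReal.ofReal (1 - p i) := by
    rw [hq, ENNReal.ofReal_sub 1 (hp0 i), ENNReal.ofReal_one]
  have h1p : 0 ≤ 1 - p i := by linarith [hp1 i]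
  rw [hle, measure_biUnion_finset hldisj fun l _ => hlmeas l,
    ENNReal.ofReal_sum_of_nonneg fun l _ =>
      mul_nonneg (mul_nonneg (Nat.cast_nonneg _) (pow_nonneg (hp0 i) _)) (pow_nonneg h1p _)]
  refine Finset.sum_congr rfl fun l _ => ?_
  rw [hcount l, h1q, hq, ENNReal.ofReal_mul (mul_nonneg (Nat.cast_nonneg _) (pow_nonneg (hp0 i) _)),
    ENNReal.ofReal_mul (Nat.cast_nonneg _),
    ENNReal.ofReal_pow (hp0 i), ENNReal.ofReal_pow h1p, ENNReal.ofReal_natCast]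

lemma filterEq_measurable {Ω : Type*} [MeasurableSpace Ω]
    {ns nc : ℕ} (X : Fin ns → Ω → Fin nc) (hmeas : ∀ j, Measurable (X j))
    (i : Fin nc) (s : Finset (Fin ns)) :
    MeasurableSet {ω | (Finset.univ.filter fun j => X j ω = i) = s} := by
  classical
  have h1 : {ω | (Finset.univ.filter fun j => X j ω = i) = s}
      = ⋂ j, X j ⁻¹' (if j ∈ s then {i} else {i}ᶜ) := by
    ext ω
    simp only [Set.mem_setOf_eq, Finset.ext_iff, Finset.mem_filter, Finset.mem_univ,
      true_and, Set.mem_iInter, Set.mem_preimage]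
    constructor
    · intro h j
      by_cases hj : j ∈ s
      · simp [hj, (h j).mpr hj]
      · simp only [hj, if_false, Set.mem_compl_iff, Set.mem_singleton_iff]
        exact fun hx => hj ((h j).mp hx)
    · intro h j
      have hjj := h j
      constructor
      · intro hx
        by_contra hj
        simp [hj] at hjj
        exact hjj hx
      · intro hj
        simpa [hj] using hjj
  rw [h1]
  exact MeasurableSet.iInter fun j => (hmeas j)
    (by by_cases hj : j ∈ s <;> simp [hj, MeasurableSet.singleton])

lemma countle_measurable {Ω : Type*} [MeasurableSpace Ω]
    {ns nc : ℕ} (X : Fin ns → Ω → Fin nc) (hmeas : ∀ j, Measurable (X j))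
    (i : Fin nc) (k : ℕ) :
    MeasurableSet {ω | (Finset.univ.filter fun j => X j ω = i).card ≤ k} := by
  classical
  have h1 : {ω | (Finset.univ.filter fun j => X j ω = i).card ≤ k}
      = ⋃ s ∈ ((Finset.univ : Finset (Fin ns)).powerset.filter fun s => s.card ≤ k),
          {ω | (Finset.univ.filter fun j => X j ω = i) = s} := by
    ext ω
    simp only [Set.mem_setOf_eq, Set.mem_iUnion, Finset.mem_filter, Finset.mem_powerset]
    exact ⟨fun h => ⟨_, ⟨Finset.filter_subset _ _, h⟩, rfl⟩, fun ⟨s, hs, he⟩ => he ▸ hs.2⟩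
  rw [h1]
  exact MeasurableSet.biUnion (Set.to_countable _) fun s _ => filterEq_measurable X hmeas i s

/-- Theorem 5: conditional concentration bound given the sampling-constraint event. -/
theorem conditional_on_constraint_bound
    {Ω : Type*} [MeasurableSpace Ω] (μ : Measure Ω) [IsProbabilityMeasure μ]
    (ns nc : ℕ) (hns : 0 < ns) (hnc : 0 < nc)
    (X : Fin ns → Ω → Fin nc)
    (hmeas : ∀ j, Measurable (X j))
    (hindep : iIndepFun X μ)
    (p : Fin nc → ℝ)
    (hp_nonneg : ∀ i, 0 ≤ p i) (hp_sum : ∑ i, p i = 1)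
    (hdist : ∀ j i, μ {ω | X j ω = i} = ENNReal.ofReal (p i))
    (k : Fin nc → ℕ)
    (α : ℝ)
    (hα : α = 1 - ((nc : ℝ) - ∑ i, ∑ l ∈ Finset.range (k i + 1),
      (ns.choose l : ℝ) * p i ^ l * (1 - p i) ^ (ns - l)))
    (hαpos : 0 < α)
    (A : Set Ω) (hA : MeasurableSet A)
    (δ : ℝ) (hδ : δ ∈ Set.Ioo (0 : ℝ) 1)
    (hPA : ENNReal.ofReal (1 - δ) ≤ μ A) :
    0 < μ {ω | ∀ i, (Finset.univ.filter fun j => X j ω = i).card ≤ k i} ∧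
    ENNReal.ofReal (max (1 - δ / α) 0) ≤
      μ (A ∩ {ω | ∀ i, (Finset.univ.filter fun j => X j ω = i).card ≤ k i}) /
        μ {ω | ∀ i, (Finset.univ.filter fun j => X j ω = i).card ≤ k i} := by
  classical
  have hp1 : ∀ i, p i ≤ 1 := fun i =>
    hp_sum ▸ Finset.single_le_sum (fun j _ => hp_nonneg j) (Finset.mem_univ i)
  set S : Fin nc → ℝ := fun i => ∑ l ∈ Finset.range (k i + 1),
    (ns.choose l : ℝ) * p i ^ l * (1 - p i) ^ (ns - l) with hSdef
  have hS : ∀ i, μ {ω | (Finset.univ.filter fun j => X j ω = i).card ≤ k i}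
      = ENNReal.ofReal (S i) := fun i =>
    meas_count_le μ X hmeas hindep p hp_nonneg hp1 hdist i (k i)
  have hS0 : ∀ i, 0 ≤ S i := fun i => Finset.sum_nonneg fun l _ =>
    mul_nonneg (mul_nonneg (Nat.cast_nonneg _) (pow_nonneg (hp_nonneg i) _))
      (pow_nonneg (by linarith [hp1 i]) _)
  have hS1 : ∀ i, S i ≤ 1 := fun i =>
    ENNReal.ofReal_le_one.mp ((hS i) ▸ prob_le_one)
  set K : Set Ω := {ω | ∀ i, (Finset.univ.filter fun j => X j ω = i).card ≤ k i} with hKdef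
  have hKinter : K = ⋂ i, {ω | (Finset.univ.filter fun j => X j ω = i).card ≤ k i} := by
    ext ω; simp [hKdef]
  have hKmeas : MeasurableSet K := by
    rw [hKinter]
    exact MeasurableSet.iInter fun i => countle_measurable X hmeas i (k i)
  -- union bound
  have hKc : μ Kᶜ ≤ ENNReal.ofReal (∑ i, (1 - S i)) := by
    have hc : Kᶜ = ⋃ i, {ω | (Finset.univ.filter fun j => X j ω = i).card ≤ k i}ᶜ := by
      rw [hKinter, Set.compl_iInter]
    rw [hc, ENNReal.ofReal_sum_of_nonneg fun i _ => by linarith [hS1 i]]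
    refine (measure_iUnion_fintype_le μ _).trans (Finset.sum_le_sum fun i _ => ?_)
    rw [prob_compl_eq_one_sub (countle_measurable X hmeas i (k i)), hS i,
      ENNReal.ofReal_sub 1 (hS0 i), ENNReal.ofReal_one]
  have hαeq : α = 1 - ∑ i, (1 - S i) := by
    have h1 : ∑ i, (1 - S i) = (nc : ℝ) - ∑ i, S i := by
      rw [Finset.sum_sub_distrib, Finset.sum_const, Finset.card_univ, Fintype.card_fin,
        nsmul_eq_mul, mul_one]
    rw [hα, h1]
  have hK : ENNReal.ofReal α ≤ μ K := by
    have h2 : μ K = 1 - μ Kᶜ := by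
      rw [prob_compl_eq_one_sub hKmeas, ENNReal.sub_sub_cancel ENNReal.one_ne_top prob_le_one]
    rw [h2, hαeq, ENNReal.ofReal_sub 1 (Finset.sum_nonneg fun i _ => by linarith [hS1 i]),
      ENNReal.ofReal_one]
    exact tsub_le_tsub_left hKc 1
  have hKpos : 0 < μ K := lt_of_lt_of_le (ENNReal.ofReal_pos.mpr hαpos) hK
  refine ⟨hKpos, ?_⟩
  rcases le_or_gt (1 - δ / α) 0 with h | h
  · rw [max_eq_right h, ENNReal.ofReal_zero]
    exact zero_le
  · rw [max_eq_left h.le]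
    have hK0 : μ K ≠ 0 := hKpos.ne'
    have hKtop : μ K ≠ ⊤ := measure_ne_top μ K
    rw [ENNReal.le_div_iff_mul_le (Or.inl hK0) (Or.inl hKtop)]
    set t : ℝ := (μ K).toReal with ht
    set a : ℝ := (μ (A ∩ K)).toReal with ha
    have hαt : α ≤ t := by
      have := ENNReal.toReal_mono hKtop hK
      rwa [ENNReal.toReal_ofReal hαpos.le] at this
    have hAineq : μ A + μ K ≤ 1 + μ (A ∩ K) := by
      rw [← measure_union_add_inter A hKmeas]
      exact add_le_add_left prob_le_one _
    have hAK : t - δ ≤ a := by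
      have h3 : (μ A).toReal + t ≤ 1 + a := by
        have := ENNReal.toReal_mono (by finiteness) hAineq
        rwa [ENNReal.toReal_add (measure_ne_top μ A) hKtop,
          ENNReal.toReal_add ENNReal.one_ne_top (measure_ne_top μ _), ENNReal.toReal_one] at this
      have h4 : 1 - δ ≤ (μ A).toReal := by
        have := ENNReal.toReal_mono (measure_ne_top μ A) hPA
        rwa [ENNReal.toReal_ofReal (by linarith [hδ.2])] at this
      linarith
    have hreal : (1 - δ / α) * t ≤ a := by
      have h5 : δ / α * α ≤ δ / α * t :=
        mul_le_mul_of_nonneg_left hαt (div_nonneg hδ.1.le hαpos.le)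
      have h6 : δ / α * α = δ := div_mul_cancel₀ δ hαpos.ne'
      nlinarith
    calc ENNReal.ofReal (1 - δ / α) * μ K
        = ENNReal.ofReal ((1 - δ / α) * t) := by
          rw [← ENNReal.ofReal_toReal hKtop, ← ht, ← ENNReal.ofReal_mul h.le]
      _ ≤ ENNReal.ofReal a := ENNReal.ofReal_le_ofReal hreal
      _ = μ (A ∩ K) := ENNReal.ofReal_toReal (measure_ne_top μ _)
end

section
/- Fix A ∈ ℝ^{m×m} and a positive definite Q ∈ ℝ^{m×m}. For i = 1, 2, let Σ_i ∈ ℝ^{m×m} be symmetric, C_i ∈ ℝ^{n_i×m}, and R_i ∈ ℝ^{n_i×n_i} positive definite. Assume Σ₁ is positive definite, Σ₁ ⪯ Σ₂, and C₂ᵀR₂⁻¹C₂ ⪯ C₁ᵀR₁⁻¹C₁. Define P_i := (Σ_i⁻¹ + C_iᵀR_i⁻¹C_i)⁻¹ and Σ_i' := A P_i Aᵀ + Q. Then P₁ and Σ₁' are positive definite, P₁ ⪯ P₂, and Σ₁' ⪯ Σ₂'. -/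
open Matrix

section Aux

variable {k : ℕ}

open scoped MatrixOrder in
noncomputable def Matrix.PosSemidef.sqrt {A : Matrix (Fin k) (Fin k) ℝ} (_ : A.PosSemidef) :
    Matrix (Fin k) (Fin k) ℝ := CFC.sqrt A

open scoped MatrixOrder in
lemma Matrix.PosSemidef.sqrt_mul_self {A : Matrix (Fin k) (Fin k) ℝ} (hA : A.PosSemidef) :
    hA.sqrt * hA.sqrt = A := CFC.sqrt_mul_sqrt_self A hA.nonneg

open scoped MatrixOrder in
lemma Matrix.PosSemidef.posSemidef_sqrt {A : Matrix (Fin k) (Fin k) ℝ} (hA : A.PosSemidef) :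
    hA.sqrt.PosSemidef := (CFC.sqrt_nonneg A).posSemidef

private lemma conjT_eq_T (Y : Matrix (Fin k) (Fin k) ℝ) : Yᴴ = Yᵀ :=
  conjTranspose_eq_transpose_of_trivial Y

private lemma conj_psd {M : Matrix (Fin k) (Fin k) ℝ} (hM : M.PosSemidef)
    (Y : Matrix (Fin k) (Fin k) ℝ) : (Yᵀ * M * Y).PosSemidef := by
  simpa [conjT_eq_T] using hM.conjTranspose_mul_mul_same Y

private lemma conj_pd {M Y : Matrix (Fin k) (Fin k) ℝ} (hM : M.PosDef)
    (hY : IsUnit Y.det) : (Yᵀ * M * Y).PosDef := by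
  refine PosDef.of_dotProduct_mulVec_pos (by simpa [conjT_eq_T] using isHermitian_conjTranspose_mul_mul Y hM.1) fun x hx => ?_
  have hinj : Function.Injective (Y.mulVec) :=
    mulVec_injective_iff_isUnit.mpr ((isUnit_iff_isUnit_det Y).mpr hY)
  have hYx : Y *ᵥ x ≠ 0 := fun h => hx (hinj (by simpa using h))
  have h2 := hM.dotProduct_mulVec_pos hYx
  simpa only [star_mulVec, dotProduct_mulVec, vecMul_vecMul, mulVec_mulVec,
    conjT_eq_T, mul_assoc] using h2

private lemma sqrt_det_isUnit {Z : Matrix (Fin k) (Fin k) ℝ} (hZ : Z.PosDef) :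
    IsUnit (hZ.posSemidef.sqrt).det := by
  have h2 : (hZ.posSemidef.sqrt).det * (hZ.posSemidef.sqrt).det = Z.det := by
    rw [← det_mul, hZ.posSemidef.sqrt_mul_self]
  have hd := hZ.det_pos
  refine isUnit_iff_ne_zero.mpr (fun h0 => ?_)
  rw [h0, mul_zero] at h2
  exact hd.ne' h2.symm

private lemma sqrt_transpose_eq {Z : Matrix (Fin k) (Fin k) ℝ} (hZ : Z.PosDef) :
    (hZ.posSemidef.sqrt)ᵀ = hZ.posSemidef.sqrt := by
  rw [← conjT_eq_T]
  exact hZ.posSemidef.posSemidef_sqrt.1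

private lemma sqrt_inv_conj_eq_one {Z : Matrix (Fin k) (Fin k) ℝ} (hZ : Z.PosDef) :
    (hZ.inv.posSemidef.sqrt) * Z * (hZ.inv.posSemidef.sqrt) = 1 := by
  set W := hZ.inv.posSemidef.sqrt with hWdef
  have hWW : W * W = Z⁻¹ := hZ.inv.posSemidef.sqrt_mul_self
  have hWdet : IsUnit W.det := sqrt_det_isUnit hZ.inv
  have hZdet : IsUnit Z.det := (isUnit_iff_isUnit_det Z).mp hZ.isUnit
  have h1 : W * Z * W * W = W := by
    rw [mul_assoc (W * Z) W W, hWW, mul_nonsing_inv_cancel_right _ _ hZdet]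
  calc W * Z * W = (W * Z * W * W) * W⁻¹ := by
        rw [mul_nonsing_inv_cancel_right _ _ hWdet]
    _ = W * W⁻¹ := by rw [h1]
    _ = 1 := mul_nonsing_inv _ hWdet

private lemma inv_sub_one_psd {Z : Matrix (Fin k) (Fin k) ℝ} (hZ : Z.PosDef)
    (h : ((1 : Matrix (Fin k) (Fin k) ℝ) - Z).PosSemidef) : (Z⁻¹ - 1).PosSemidef := by
  set W := hZ.inv.posSemidef.sqrt with hWdef
  have hWW : W * W = Z⁻¹ := hZ.inv.posSemidef.sqrt_mul_self
  have hWZW : W * Z * W = 1 := sqrt_inv_conj_eq_one hZ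
  have hWT : Wᵀ = W := sqrt_transpose_eq hZ.inv
  have key := conj_psd h W
  rw [hWT] at key
  have e : W * (1 - Z) * W = Z⁻¹ - 1 := by
    rw [mul_sub, mul_one, sub_mul, hWW, hWZW]
  rwa [e] at key

/-- Anti-monotonicity of matrix inversion on positive definite matrices. -/
private lemma inv_antitone {M N : Matrix (Fin k) (Fin k) ℝ} (hM : M.PosDef) (hN : N.PosDef)
    (h : (N - M).PosSemidef) : (M⁻¹ - N⁻¹).PosSemidef := by
  set Y := hN.inv.posSemidef.sqrt with hYdef
  have hYY : Y * Y = N⁻¹ := hN.inv.posSemidef.sqrt_mul_self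
  have hYT : Yᵀ = Y := sqrt_transpose_eq hN.inv
  have hYdet : IsUnit Y.det := sqrt_det_isUnit hN.inv
  have hYNY : Y * N * Y = 1 := sqrt_inv_conj_eq_one hN
  set Z := Y * M * Y with hZdef
  have hZpd : Z.PosDef := by
    have := conj_pd hM hYdet
    rwa [hYT] at this
  have h1Z : ((1 : Matrix (Fin k) (Fin k) ℝ) - Z).PosSemidef := by
    have hc := conj_psd h Y
    rw [hYT] at hc
    have e : Y * (N - M) * Y = 1 - Z := by rw [mul_sub, sub_mul, hYNY, hZdef]
    rwa [e] at hc
  have key := inv_sub_one_psd hZpd h1Z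
  have hfin := conj_psd key Y
  rw [hYT] at hfin
  have hZinv : Z⁻¹ = Y⁻¹ * (M⁻¹ * Y⁻¹) := by
    rw [hZdef, Matrix.mul_inv_rev, Matrix.mul_inv_rev]
  have e2 : Y * (Z⁻¹ - 1) * Y = M⁻¹ - N⁻¹ := by
    rw [mul_sub, mul_one, sub_mul, hYY, hZinv,
      mul_nonsing_inv_cancel_left _ _ hYdet,
      nonsing_inv_mul_cancel_right _ _ hYdet]
  rwa [e2] at hfin

end Aux

/-- Corollary 4: one-step monotonicity of the Kalman filter covariance updates. -/
theorem one_step_covariance_comparison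
    {m n1 n2 : ℕ}
    (A Q : Matrix (Fin m) (Fin m) ℝ) (hQ : Q.PosDef)
    (S1 S2 : Matrix (Fin m) (Fin m) ℝ)
    (hS1sym : S1.IsSymm) (hS2sym : S2.IsSymm)
    (C1 : Matrix (Fin n1) (Fin m) ℝ) (C2 : Matrix (Fin n2) (Fin m) ℝ)
    (R1 : Matrix (Fin n1) (Fin n1) ℝ) (R2 : Matrix (Fin n2) (Fin n2) ℝ)
    (hR1 : R1.PosDef) (hR2 : R2.PosDef)
    (hS1pd : S1.PosDef)
    (hS12 : (S2 - S1).PosSemidef)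
    (hC : (C1ᵀ * R1⁻¹ * C1 - C2ᵀ * R2⁻¹ * C2).PosSemidef)
    (P1 P2 S1' S2' : Matrix (Fin m) (Fin m) ℝ)
    (hP1 : P1 = (S1⁻¹ + C1ᵀ * R1⁻¹ * C1)⁻¹)
    (hP2 : P2 = (S2⁻¹ + C2ᵀ * R2⁻¹ * C2)⁻¹)
    (hS1' : S1' = A * P1 * Aᵀ + Q)
    (hS2' : S2' = A * P2 * Aᵀ + Q) :
    P1.PosDef ∧ S1'.PosDef ∧ (P2 - P1).PosSemidef ∧ (S2' - S1').PosSemidef := by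
  have hS2pd : S2.PosDef := by
    have := hS1pd.add_posSemidef hS12
    simpa using this
  have hC1psd : (C1ᵀ * R1⁻¹ * C1).PosSemidef := by
    simpa [conjTranspose_eq_transpose_of_trivial] using
      hR1.inv.posSemidef.conjTranspose_mul_mul_same C1
  have hC2psd : (C2ᵀ * R2⁻¹ * C2).PosSemidef := by
    simpa [conjTranspose_eq_transpose_of_trivial] using
      hR2.inv.posSemidef.conjTranspose_mul_mul_same C2
  have hM1pd : (S1⁻¹ + C1ᵀ * R1⁻¹ * C1).PosDef := hS1pd.inv.add_posSemidef hC1psd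
  have hM2pd : (S2⁻¹ + C2ᵀ * R2⁻¹ * C2).PosDef := hS2pd.inv.add_posSemidef hC2psd
  have hM21 : ((S1⁻¹ + C1ᵀ * R1⁻¹ * C1) - (S2⁻¹ + C2ᵀ * R2⁻¹ * C2)).PosSemidef := by
    have e : (S1⁻¹ + C1ᵀ * R1⁻¹ * C1) - (S2⁻¹ + C2ᵀ * R2⁻¹ * C2)
        = (S1⁻¹ - S2⁻¹) + (C1ᵀ * R1⁻¹ * C1 - C2ᵀ * R2⁻¹ * C2) := by abel
    rw [e]
    exact (inv_antitone hS1pd hS2pd hS12).add hC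
  have hP1pd : P1.PosDef := by rw [hP1]; exact hM1pd.inv
  have hP21 : (P2 - P1).PosSemidef := by
    rw [hP1, hP2]
    exact inv_antitone hM2pd hM1pd hM21
  have hS1'pd : S1'.PosDef := by
    rw [hS1']
    have hAP : (A * P1 * Aᵀ).PosSemidef := by
      simpa [conjTranspose_eq_transpose_of_trivial] using
        hP1pd.posSemidef.mul_mul_conjTranspose_same A
    exact Matrix.PosDef.posSemidef_add hAP hQ
  refine ⟨hP1pd, hS1'pd, hP21, ?_⟩
  rw [hS2', hS1']
  have e : (A * P2 * Aᵀ + Q) - (A * P1 * Aᵀ + Q) = A * (P2 - P1) * Aᵀ := by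
    rw [mul_sub, sub_mul]; abel
  rw [e]
  simpa [conjTranspose_eq_transpose_of_trivial] using
    hP21.mul_mul_conjTranspose_same A
end

section
/- Fix A ∈ ℝ^{m×m} and a positive definite Q ∈ ℝ^{m×m}. For i = 1, 2, let C_i ∈ ℝ^{n_i×m}, R_i ∈ ℝ^{n_i×n_i} positive definite, and let initial symmetric matrices Σ_{1,(0)}, Σ_{2,(0)} be given with Σ_{1,(0)} positive definite and Σ_{1,(0)} ⪯ Σ_{2,(0)}. Define recursively P_{i,(t)} := (Σ_{i,(t)}⁻¹ + C_iᵀR_i⁻¹C_i)⁻¹ and Σ_{i,(t+1)} := A P_{i,(t)} Aᵀ + Q for all t ≥ 0. If C₂ᵀR₂⁻¹C₂ ⪯ C₁ᵀR₁⁻¹C₁, then for every t ≥ 0 the matrices P_{1,(t)} and Σ_{1,(t+1)} are positive definite, P_{1,(t)} ⪯ P_{2,(t)}, and Σ_{1,(t+1)} ⪯ Σ_{2,(t+1)}. -/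
open Matrix

lemma psd_conj_t {m k : ℕ} {M : Matrix (Fin m) (Fin m) ℝ} (hM : M.PosSemidef)
    (B : Matrix (Fin k) (Fin m) ℝ) : (B * M * Bᵀ).PosSemidef := by
  simpa [Matrix.conjTranspose_eq_transpose_of_trivial] using
    hM.mul_mul_conjTranspose_same B

lemma inv_symm_real {m : ℕ} {M : Matrix (Fin m) (Fin m) ℝ} (hM : M.PosDef) :
    (M⁻¹)ᵀ = M⁻¹ := by
  have := hM.inv.isHermitian
  rwa [Matrix.IsHermitian, Matrix.conjTranspose_eq_transpose_of_trivial] at this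

lemma inv_sub_inv_psd {m : ℕ} {M N : Matrix (Fin m) (Fin m) ℝ}
    (hM : M.PosDef) (hN : N.PosDef) (h : (N - M).PosSemidef) :
    (M⁻¹ - N⁻¹).PosSemidef := by
  set D := N - M with hD
  have hMdet : IsUnit M.det := isUnit_iff_ne_zero.mpr hM.det_pos.ne'
  have hNdet : IsUnit N.det := isUnit_iff_ne_zero.mpr hN.det_pos.ne'
  have key : M⁻¹ - N⁻¹ = N⁻¹ * D * N⁻¹ + N⁻¹ * D * M⁻¹ * D * N⁻¹ := by
    have h1 : N⁻¹ * D * M⁻¹ = M⁻¹ - N⁻¹ := by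
      rw [hD, Matrix.mul_sub, Matrix.sub_mul, Matrix.nonsing_inv_mul N hNdet,
        Matrix.mul_assoc N⁻¹ M M⁻¹, Matrix.mul_nonsing_inv M hMdet, Matrix.one_mul,
        Matrix.mul_one]
    have h2 : M⁻¹ * N = 1 + M⁻¹ * D := by
      rw [hD, Matrix.mul_sub, Matrix.nonsing_inv_mul M hMdet]
      abel
    calc M⁻¹ - N⁻¹ = N⁻¹ * D * (M⁻¹ * N) * N⁻¹ := by
          rw [← h1]; simp [Matrix.mul_assoc, Matrix.mul_nonsing_inv N hNdet]
      _ = N⁻¹ * D * N⁻¹ + N⁻¹ * D * M⁻¹ * D * N⁻¹ := by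
          rw [h2, Matrix.mul_add, Matrix.mul_one, Matrix.add_mul]
          simp [Matrix.mul_assoc]
  have hDsymm : Dᵀ = D := by
    have := h.isHermitian
    rwa [Matrix.IsHermitian, Matrix.conjTranspose_eq_transpose_of_trivial] at this
  have t1 : (N⁻¹ * D * N⁻¹).PosSemidef := by
    have := psd_conj_t h N⁻¹
    rwa [inv_symm_real hN] at this
  have t2 : (N⁻¹ * D * M⁻¹ * D * N⁻¹).PosSemidef := by
    have := psd_conj_t hM.inv.posSemidef (N⁻¹ * D)
    have ht : (N⁻¹ * D)ᵀ = D * N⁻¹ := by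
      rw [Matrix.transpose_mul, hDsymm, inv_symm_real hN]
    rw [ht] at this
    convert this using 1
    rw [Matrix.mul_assoc, Matrix.mul_assoc, Matrix.mul_assoc]
  rw [key]
  exact t1.add t2

/-- Corollary 4 (iterated form): monotonicity of the Kalman filter covariance
recursion for all time instants. -/
theorem iterated_covariance_comparison
    {m n1 n2 : ℕ}
    (A Q : Matrix (Fin m) (Fin m) ℝ) (hQ : Q.PosDef)
    (C1 : Matrix (Fin n1) (Fin m) ℝ) (C2 : Matrix (Fin n2) (Fin m) ℝ)
    (R1 : Matrix (Fin n1) (Fin n1) ℝ) (R2 : Matrix (Fin n2) (Fin n2) ℝ)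
    (hR1 : R1.PosDef) (hR2 : R2.PosDef)
    (S1 S2 : ℕ → Matrix (Fin m) (Fin m) ℝ)
    (P1 P2 : ℕ → Matrix (Fin m) (Fin m) ℝ)
    (hS10sym : (S1 0).IsSymm) (hS20sym : (S2 0).IsSymm)
    (hS10pd : (S1 0).PosDef)
    (hS0 : ((S2 0) - (S1 0)).PosSemidef)
    (hP1 : ∀ t, P1 t = ((S1 t)⁻¹ + C1ᵀ * R1⁻¹ * C1)⁻¹)
    (hP2 : ∀ t, P2 t = ((S2 t)⁻¹ + C2ᵀ * R2⁻¹ * C2)⁻¹)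
    (hS1rec : ∀ t, S1 (t + 1) = A * P1 t * Aᵀ + Q)
    (hS2rec : ∀ t, S2 (t + 1) = A * P2 t * Aᵀ + Q)
    (hC : (C1ᵀ * R1⁻¹ * C1 - C2ᵀ * R2⁻¹ * C2).PosSemidef) :
    ∀ t, (P1 t).PosDef ∧ (S1 (t + 1)).PosDef ∧
      (P2 t - P1 t).PosSemidef ∧ (S2 (t + 1) - S1 (t + 1)).PosSemidef := by
  -- R⁻¹ psd hence CᵀR⁻¹C psd
  have hW1 : (C1ᵀ * R1⁻¹ * C1).PosSemidef := by
    have := hR1.inv.posSemidef.conjTranspose_mul_mul_same C1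
    simpa [Matrix.conjTranspose_eq_transpose_of_trivial] using this
  have hW2 : (C2ᵀ * R2⁻¹ * C2).PosSemidef := by
    have := hR2.inv.posSemidef.conjTranspose_mul_mul_same C2
    simpa [Matrix.conjTranspose_eq_transpose_of_trivial] using this
  -- invariant
  have inv : ∀ t, (S1 t).PosDef ∧ (S2 t).PosDef ∧ (S2 t - S1 t).PosSemidef := by
    intro t
    induction t with
    | zero =>
      refine ⟨hS10pd, ?_, hS0⟩
      have := hS10pd.add_posSemidef hS0
      simpa using this
    | succ t ih =>
      obtain ⟨h1, h2, h12⟩ := ih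
      have hM1 : ((S1 t)⁻¹ + C1ᵀ * R1⁻¹ * C1).PosDef := h1.inv.add_posSemidef hW1
      have hM2 : ((S2 t)⁻¹ + C2ᵀ * R2⁻¹ * C2).PosDef := h2.inv.add_posSemidef hW2
      have hMd : (((S1 t)⁻¹ + C1ᵀ * R1⁻¹ * C1) - ((S2 t)⁻¹ + C2ᵀ * R2⁻¹ * C2)).PosSemidef := by
        have hs : ((S1 t)⁻¹ - (S2 t)⁻¹).PosSemidef := inv_sub_inv_psd h1 h2 h12
        have := hs.add hC
        convert this using 1
        abel
      have hP1pd : (P1 t).PosDef := by rw [hP1 t]; exact hM1.inv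
      have hP2pd : (P2 t).PosDef := by rw [hP2 t]; exact hM2.inv
      have hPd : (P2 t - P1 t).PosSemidef := by
        rw [hP1 t, hP2 t]
        exact inv_sub_inv_psd hM2 hM1 hMd
      refine ⟨?_, ?_, ?_⟩
      · rw [hS1rec t]
        exact Matrix.PosDef.posSemidef_add (psd_conj_t hP1pd.posSemidef A) hQ
      · rw [hS2rec t]
        exact Matrix.PosDef.posSemidef_add (psd_conj_t hP2pd.posSemidef A) hQ
      · rw [hS1rec t, hS2rec t]
        have := psd_conj_t hPd A
        convert this using 1
        noncomm_ring
  intro t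
  obtain ⟨h1, h2, h12⟩ := inv t
  have hM1 : ((S1 t)⁻¹ + C1ᵀ * R1⁻¹ * C1).PosDef := h1.inv.add_posSemidef hW1
  have hM2 : ((S2 t)⁻¹ + C2ᵀ * R2⁻¹ * C2).PosDef := h2.inv.add_posSemidef hW2
  have hMd : (((S1 t)⁻¹ + C1ᵀ * R1⁻¹ * C1) - ((S2 t)⁻¹ + C2ᵀ * R2⁻¹ * C2)).PosSemidef := by
    have hs : ((S1 t)⁻¹ - (S2 t)⁻¹).PosSemidef := inv_sub_inv_psd h1 h2 h12
    have := hs.add hC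
    convert this using 1
    abel
  have hP1pd : (P1 t).PosDef := by rw [hP1 t]; exact hM1.inv
  have hP2pd : (P2 t).PosDef := by rw [hP2 t]; exact hM2.inv
  have hPd : (P2 t - P1 t).PosSemidef := by
    rw [hP1 t, hP2 t]
    exact inv_sub_inv_psd hM2 hM1 hMd
  refine ⟨hP1pd, ?_, hPd, ?_⟩
  · rw [hS1rec t]
    exact Matrix.PosDef.posSemidef_add (psd_conj_t hP1pd.posSemidef A) hQ
  · rw [hS1rec t, hS2rec t]
    have := psd_conj_t hPd A
    convert this using 1
    noncomm_ring
end

section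
/- Fix A ∈ ℝ^{m×m} and a positive definite Q ∈ ℝ^{m×m}. For i = 1, 2, let C_i ∈ ℝ^{n_i×m} and R_i ∈ ℝ^{n_i×n_i} be positive definite, and suppose P₁, P₂ ∈ ℝ^{m×m} are positive definite matrices such that for every positive definite initial matrix X₀, the sequence defined by X_{t+1} = f₂(X_t, C_iᵀR_i⁻¹C_i) converges to P_i (for i = 1, 2 respectively). If C₂ᵀR₂⁻¹C₂ ⪯ C₁ᵀR₁⁻¹C₁, then P₁ ⪯ P₂. -/
open Matrix Filter

/-- The Riccati-type map `f₂(Λ, Θ) = ((A Λ Aᵀ + Q)⁻¹ + Θ)⁻¹`. -/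
noncomputable def f2 {m : ℕ} (A Q Λ Θ : Matrix (Fin m) (Fin m) ℝ) :
    Matrix (Fin m) (Fin m) ℝ :=
  ((A * Λ * Aᵀ + Q)⁻¹ + Θ)⁻¹

section Helpers

variable {ι : Type*} [Fintype ι] [DecidableEq ι]

open scoped MatrixOrder

/-- Conjugation by a symmetric matrix preserves positive semidefiniteness. -/
lemma psd_conj {M S : Matrix ι ι ℝ} (hM : M.PosSemidef) (hS : Sᴴ = S) :
    (S * M * S).PosSemidef := by
  have h := hM.conjTranspose_mul_mul_same S
  rwa [hS] at h

lemma isUnit_det_of_posDef {M : Matrix ι ι ℝ} (hM : M.PosDef) : IsUnit M.det :=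
  isUnit_iff_ne_zero.mpr hM.det_pos.ne'

/-- Inverse is antitone on positive definite matrices (Loewner order). -/
lemma inv_sub_inv_posSemidef {M N : Matrix ι ι ℝ} (hM : M.PosDef) (hN : N.PosDef)
    (h : (N - M).PosSemidef) : (M⁻¹ - N⁻¹).PosSemidef := by
  set S := CFC.sqrt M with hSdef
  have hSS : S * S = M := CFC.sqrt_mul_sqrt_self M hM.posSemidef.nonneg
  have hSherm : Sᴴ = S := (CFC.sqrt_nonneg M).posSemidef.1
  have hdetS : IsUnit S.det := by
    have hmul : S.det * S.det = M.det := by rw [← det_mul, hSS]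
    refine isUnit_iff_ne_zero.mpr fun h0 => ?_
    rw [h0, mul_zero] at hmul
    exact hM.det_pos.ne' hmul.symm
  set T := S⁻¹ with hTdef
  have hT : T * S = 1 := nonsing_inv_mul S hdetS
  have hT' : S * T = 1 := mul_nonsing_inv S hdetS
  have hTherm : Tᴴ = T := (Matrix.IsHermitian.inv hSherm)
  have hTMT : T * M * T = 1 := by
    rw [← hSS, ← mul_assoc, hT, one_mul, hT']
  set C := T * N * T with hCdef
  have hCpsd : C.PosSemidef := psd_conj hN.posSemidef hTherm
  have hC1 : (C - 1).PosSemidef := by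
    have e : C - 1 = T * (N - M) * T := by
      rw [mul_sub, sub_mul, hTMT]
    rw [e]; exact psd_conj h hTherm
  set U := CFC.sqrt C with hUdef
  have hUU : U * U = C := CFC.sqrt_mul_sqrt_self C hCpsd.nonneg
  have hUherm : Uᴴ = U := (CFC.sqrt_nonneg C).posSemidef.1
  have hdetN : IsUnit N.det := isUnit_det_of_posDef hN
  have hdetT : IsUnit T.det := by
    have : T.det * S.det = 1 := by rw [← det_mul, hT, det_one]
    exact IsUnit.of_mul_eq_one _ this
  have hdetC : IsUnit C.det := by
    rw [hCdef, det_mul, det_mul]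
    exact (hdetT.mul hdetN).mul hdetT
  have hdetU : IsUnit U.det := by
    have hmul : U.det * U.det = C.det := by rw [← det_mul, hUU]
    refine isUnit_iff_ne_zero.mpr fun h0 => ?_
    rw [h0, mul_zero] at hmul
    exact (isUnit_iff_ne_zero.mp hdetC) hmul.symm
  set V := U⁻¹ with hVdef
  have hVherm : Vᴴ = V := (Matrix.IsHermitian.inv hUherm)
  have hVU : V * U = 1 := nonsing_inv_mul U hdetU
  have hVU' : U * V = 1 := mul_nonsing_inv U hdetU
  have hVCV : V * C * V = 1 := by
    rw [← hUU, ← mul_assoc, hVU, one_mul, hVU']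
  have hVV : V * V = C⁻¹ := by rw [← hUU, Matrix.mul_inv_rev]
  have h2 : (1 - C⁻¹).PosSemidef := by
    have e : 1 - C⁻¹ = V * (C - 1) * V := by
      rw [mul_sub, sub_mul, hVCV, mul_one, hVV]
    rw [e]; exact psd_conj hC1 hVherm
  have hTT : T * T = M⁻¹ := by rw [hTdef, ← Matrix.mul_inv_rev, hSS]
  have hCinv : C⁻¹ = S * N⁻¹ * S := by
    have hTinv : T⁻¹ = S := nonsing_inv_nonsing_inv S hdetS
    rw [hCdef, Matrix.mul_inv_rev, Matrix.mul_inv_rev, hTinv, ← mul_assoc]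
  have hTCinvT : T * C⁻¹ * T = N⁻¹ := by
    rw [hCinv, ← mul_assoc, ← mul_assoc, hT, one_mul, mul_assoc, hT', mul_one]
  have e : M⁻¹ - N⁻¹ = T * (1 - C⁻¹) * T := by
    rw [mul_sub, sub_mul, mul_one, hTT, hTCinvT]
  rw [e]
  exact psd_conj h2 hTherm

end Helpers

section F2

variable {m : ℕ}

lemma AXAQ_posDef (A Q X : Matrix (Fin m) (Fin m) ℝ) (hQ : Q.PosDef) (hX : X.PosDef) :
    (A * X * Aᵀ + Q).PosDef := by
  have h := hX.posSemidef.mul_mul_conjTranspose_same A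
  rw [conjTranspose_eq_transpose_of_trivial] at h
  exact Matrix.PosDef.posSemidef_add h hQ

lemma f2_posDef (A Q Θ X : Matrix (Fin m) (Fin m) ℝ) (hQ : Q.PosDef) (hΘ : Θ.PosSemidef)
    (hX : X.PosDef) : (f2 A Q X Θ).PosDef := by
  have h1 : (A * X * Aᵀ + Q).PosDef := AXAQ_posDef A Q X hQ hX
  exact (h1.inv.add_posSemidef hΘ).inv

lemma f2_mono (A Q Θ1 Θ2 X Y : Matrix (Fin m) (Fin m) ℝ) (hQ : Q.PosDef)
    (hX : X.PosDef) (hY : Y.PosDef) (hXY : (Y - X).PosSemidef)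
    (hΘ2 : Θ2.PosSemidef) (hΔ : (Θ1 - Θ2).PosSemidef) :
    (f2 A Q Y Θ2 - f2 A Q X Θ1).PosSemidef := by
  have hMX : (A * X * Aᵀ + Q).PosDef := AXAQ_posDef A Q X hQ hX
  have hMY : (A * Y * Aᵀ + Q).PosDef := AXAQ_posDef A Q Y hQ hY
  have hMXY : ((A * Y * Aᵀ + Q) - (A * X * Aᵀ + Q)).PosSemidef := by
    have h := hXY.mul_mul_conjTranspose_same A
    rw [conjTranspose_eq_transpose_of_trivial] at h
    have e : (A * Y * Aᵀ + Q) - (A * X * Aᵀ + Q) = A * (Y - X) * Aᵀ := by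
      rw [mul_sub, sub_mul]; abel
    rw [e]; exact h
  have h1 : ((A * X * Aᵀ + Q)⁻¹ - (A * Y * Aᵀ + Q)⁻¹).PosSemidef :=
    inv_sub_inv_posSemidef hMX hMY hMXY
  have hM' : ((A * X * Aᵀ + Q)⁻¹ + Θ1).PosDef := hMX.inv.add_posSemidef (by
    have := hΔ.add hΘ2
    simpa using this)
  have hN' : ((A * Y * Aᵀ + Q)⁻¹ + Θ2).PosDef := hMY.inv.add_posSemidef hΘ2
  have h2 : (((A * X * Aᵀ + Q)⁻¹ + Θ1) - ((A * Y * Aᵀ + Q)⁻¹ + Θ2)).PosSemidef := by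
    have := h1.add hΔ
    have e : ((A * X * Aᵀ + Q)⁻¹ + Θ1) - ((A * Y * Aᵀ + Q)⁻¹ + Θ2) =
        ((A * X * Aᵀ + Q)⁻¹ - (A * Y * Aᵀ + Q)⁻¹) + (Θ1 - Θ2) := by abel
    rw [e]; exact this
  exact inv_sub_inv_posSemidef hN' hM' h2

lemma posSemidef_of_tendsto {f : ℕ → Matrix (Fin m) (Fin m) ℝ}
    {L : Matrix (Fin m) (Fin m) ℝ} (h : Tendsto f atTop (nhds L))
    (hf : ∀ t, (f t).PosSemidef) : L.PosSemidef := by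
  refine posSemidef_iff_dotProduct_mulVec.mpr ⟨?_, ?_⟩
  · have hcont : Continuous fun M : Matrix (Fin m) (Fin m) ℝ => Mᴴ :=
      Continuous.matrix_conjTranspose continuous_id
    have h1 : Tendsto (fun t => (f t)ᴴ) atTop (nhds Lᴴ) :=
      (hcont.tendsto L).comp h
    have h2 : (fun t => (f t)ᴴ) = f := funext fun t => (hf t).1
    rw [h2] at h1
    exact tendsto_nhds_unique h1 h
  · intro x
    have hcont : Continuous fun M : Matrix (Fin m) (Fin m) ℝ => star x ⬝ᵥ M *ᵥ x :=
      Continuous.dotProduct continuous_const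
        (Continuous.matrix_mulVec continuous_id continuous_const)
    exact ge_of_tendsto ((hcont.tendsto L).comp h)
      (Eventually.of_forall fun t => (hf t).dotProduct_mulVec_nonneg x)

end F2

/-- Corollary 6: comparison of steady-state error covariances. -/
theorem steady_state_covariance_comparison
    {m n1 n2 : ℕ}
    (A Q : Matrix (Fin m) (Fin m) ℝ) (hQ : Q.PosDef)
    (C1 : Matrix (Fin n1) (Fin m) ℝ) (C2 : Matrix (Fin n2) (Fin m) ℝ)
    (R1 : Matrix (Fin n1) (Fin n1) ℝ) (R2 : Matrix (Fin n2) (Fin n2) ℝ)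
    (hR1 : R1.PosDef) (hR2 : R2.PosDef)
    (P1 P2 : Matrix (Fin m) (Fin m) ℝ)
    (hP1pd : P1.PosDef) (hP2pd : P2.PosDef)
    (hP1conv : ∀ X0 : Matrix (Fin m) (Fin m) ℝ, X0.PosDef →
      Tendsto (fun t => (fun X => f2 A Q X (C1ᵀ * R1⁻¹ * C1))^[t] X0) atTop (nhds P1))
    (hP2conv : ∀ X0 : Matrix (Fin m) (Fin m) ℝ, X0.PosDef →
      Tendsto (fun t => (fun X => f2 A Q X (C2ᵀ * R2⁻¹ * C2))^[t] X0) atTop (nhds P2))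
    (hC : (C1ᵀ * R1⁻¹ * C1 - C2ᵀ * R2⁻¹ * C2).PosSemidef) :
    (P2 - P1).PosSemidef := by
  set Θ1 := C1ᵀ * R1⁻¹ * C1 with hΘ1def
  set Θ2 := C2ᵀ * R2⁻¹ * C2 with hΘ2def
  have hΘ2 : Θ2.PosSemidef := by
    have h := hR2.inv.posSemidef.conjTranspose_mul_mul_same C2
    rwa [conjTranspose_eq_transpose_of_trivial] at h
  -- the two iterations starting at Q
  have key : ∀ t : ℕ,
      ((fun X => f2 A Q X Θ1)^[t] Q).PosDef ∧
      ((fun X => f2 A Q X Θ2)^[t] Q).PosDef ∧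
      (((fun X => f2 A Q X Θ2)^[t] Q) - ((fun X => f2 A Q X Θ1)^[t] Q)).PosSemidef := by
    intro t
    induction t with
    | zero =>
      refine ⟨hQ, hQ, ?_⟩
      simp only [Function.iterate_zero, id_eq, sub_self]
      exact Matrix.PosSemidef.zero
    | succ t ih =>
      obtain ⟨h1, h2, h3⟩ := ih
      rw [Function.iterate_succ_apply', Function.iterate_succ_apply']
      have hΘ1psd : Θ1.PosSemidef := by
        have := hC.add hΘ2
        simpa using this
      exact ⟨f2_posDef A Q Θ1 _ hQ hΘ1psd h1, f2_posDef A Q Θ2 _ hQ hΘ2 h2,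
        f2_mono A Q Θ1 Θ2 _ _ hQ h1 h2 h3 hΘ2 hC⟩
  have hconv : Tendsto
      (fun t => ((fun X => f2 A Q X Θ2)^[t] Q) - ((fun X => f2 A Q X Θ1)^[t] Q))
      atTop (nhds (P2 - P1)) :=
    (hP2conv Q hQ).sub (hP1conv Q hQ)
  exact posSemidef_of_tendsto hconv fun t => (key t).2.2
end

section
/- Fix A ∈ ℝ^{m×m}, a positive definite Q ∈ ℝ^{m×m}, and a positive semidefinite Π ∈ ℝ^{m×m}. Suppose U ∈ ℝ^{m×m} is positive definite and satisfies the steady-state equation U = ((A U Aᵀ + Q)⁻¹ + Π)⁻¹. Set X := U⁻¹. Then the 2m × 2m block matrix [[ −X + Q⁻¹ + Π , Q⁻¹A ], [ (Q⁻¹A)ᵀ , X + AᵀQ⁻¹A ]] is positive semidefinite. -/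
open Matrix

/-- Every feasible point of the steady-state program yields, via `X := U⁻¹`,
a feasible point of its convex relaxation: the associated block matrix is p.s.d. -/
theorem steady_state_block_matrix_psd
    {m : ℕ}
    (A Q Pi : Matrix (Fin m) (Fin m) ℝ)
    (hQ : Q.PosDef) (hPi : Pi.PosSemidef)
    (U : Matrix (Fin m) (Fin m) ℝ) (hU : U.PosDef)
    (hfix : U = ((A * U * Aᵀ + Q)⁻¹ + Pi)⁻¹)
    (X : Matrix (Fin m) (Fin m) ℝ) (hX : X = U⁻¹) :
    (Matrix.fromBlocks (-X + Q⁻¹ + Pi) (Q⁻¹ * A) (Q⁻¹ * A)ᵀ (X + Aᵀ * Q⁻¹ * A)).PosSemidef := by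
  set S : Matrix (Fin m) (Fin m) ℝ := A * U * Aᵀ + Q with hS
  have hAUA : (A * U * Aᵀ).PosSemidef := by
    simpa using hU.posSemidef.mul_mul_conjTranspose_same A
  have hSpd : S.PosDef := by
    rw [hS, add_comm]
    exact hQ.add_posSemidef hAUA
  have hXpd : X.PosDef := hX ▸ hU.inv
  have hSinvPi : (S⁻¹ + Pi).PosDef := hSpd.inv.add_posSemidef hPi
  have hXeq : X = S⁻¹ + Pi := by
    rw [hX, hfix]
    exact Matrix.nonsing_inv_nonsing_inv _ ((Matrix.isUnit_iff_isUnit_det _).mp hSinvPi.isUnit)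
  have hAQA : (Aᵀ * Q⁻¹ * A).PosSemidef := by
    simpa using hQ.inv.posSemidef.conjTranspose_mul_mul_same A
  have hDpd : (X + Aᵀ * Q⁻¹ * A).PosDef := hXpd.add_posSemidef hAQA
  haveI := hDpd.isUnit.invertible
  have hBH : (Q⁻¹ * A)ᵀ = (Q⁻¹ * A)ᴴ :=
    (Matrix.conjTranspose_eq_transpose_of_trivial _).symm
  rw [hBH, Matrix.PosDef.fromBlocks₂₂ _ _ hDpd]
  -- Woodbury identity
  have hW : S⁻¹ = Q⁻¹ - Q⁻¹ * A * (X + Aᵀ * Q⁻¹ * A)⁻¹ * Aᵀ * Q⁻¹ := by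
    rw [hS, add_comm (A * U * Aᵀ) Q, hX]
    exact Matrix.add_mul_mul_inv_eq_sub Q A U Aᵀ hQ.isUnit hU.isUnit
      (by rw [← hX]; exact hDpd.isUnit)
  have hQit : Q⁻¹ᵀ = Q⁻¹ := by
    have := hQ.inv.isHermitian
    rwa [Matrix.IsHermitian, Matrix.conjTranspose_eq_transpose_of_trivial] at this
  have hBT : (Q⁻¹ * A)ᴴ = Aᵀ * Q⁻¹ := by
    rw [← hBH, Matrix.transpose_mul, hQit]
  have hW' : Q⁻¹ * A * (X + Aᵀ * Q⁻¹ * A)⁻¹ * (Q⁻¹ * A)ᴴ = Q⁻¹ - S⁻¹ := by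
    rw [hBT, hW, ← Matrix.mul_assoc]
    abel
  have hzero : (-X + Q⁻¹ + Pi) - Q⁻¹ * A * (X + Aᵀ * Q⁻¹ * A)⁻¹ * (Q⁻¹ * A)ᴴ = 0 := by
    rw [hW', hXeq]
    abel
  rw [hzero]
  exact Matrix.PosSemidef.zero
end
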